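/- Let P, O: [0,d] → ℝ be twice differentiable, increasing, strictly concave functions and q ≥ 0. Define z*(x) = min(x, z_max) where z_max maximizes z ↦ O(z) - qz on [0,d], and define the latency-free utility v(x) = P(d - x) - (d - x)q + O(z*(x)) - z*(x)q for x ∈ [0,d]. Then the cost of shifting c(x) = max_{y∈[0,d]} v(y) - v(x) is nonnegative, differentiable and strictly convex on [0,d]. -/

import Mathlib

open Set Filter Topology Asymptotics

/-- with `P, O` twice differentiable increasing strictly concave on `[0,d]`,
`q ≥ 0`, `z*(x) = min x z_max` where `z_max` maximizes `z ↦ O z - q z` on `[0,d]`,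
`v(x) = P(d-x) - (d-x)q + O(z*(x)) - z*(x)q` and `c(x) = max v - v(x)`, the cost of
shifting `c` is nonnegative, differentiable and strictly convex on `[0,d]`. -/
theorem stmt_1 (d q : ℝ) (hd : 0 < d) (hq : 0 ≤ q)
    (P O : ℝ → ℝ)
    (hP1 : DifferentiableOn ℝ P (Icc 0 d))
    (hP2 : DifferentiableOn ℝ (deriv P) (Icc 0 d))
    (hPmono : StrictMonoOn P (Icc 0 d))
    (hPconc : StrictConcaveOn ℝ (Icc 0 d) P)
    (hO1 : DifferentiableOn ℝ O (Icc 0 d))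
    (hO2 : DifferentiableOn ℝ (deriv O) (Icc 0 d))
    (hOmono : StrictMonoOn O (Icc 0 d))
    (hOconc : StrictConcaveOn ℝ (Icc 0 d) O)
    (zmax : ℝ) (hzmax1 : zmax ∈ Icc (0:ℝ) d)
    (hzmax2 : IsMaxOn (fun z => O z - q * z) (Icc 0 d) zmax)
    (zstar v c : ℝ → ℝ)
    (hzstar : ∀ x, zstar x = min x zmax)
    (hv : ∀ x, v x = P (d - x) - (d - x) * q + O (zstar x) - zstar x * q)
    (hc : ∀ x, c x = sSup (v '' Icc 0 d) - v x) :
    (∀ x ∈ Icc (0:ℝ) d, 0 ≤ c x) ∧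
      DifferentiableOn ℝ c (Icc 0 d) ∧
      StrictConvexOn ℝ (Icc 0 d) c := by
  set F : ℝ → ℝ := fun z => O z - q * z with hF
  set g : ℝ → ℝ := fun x => F (min x zmax) with hg
  set h : ℝ → ℝ := fun x => P (d - x) - (d - x) * q with hh
  have hveq : v = fun x => h x + g x := by
    funext x
    rw [hv x, hzstar x]
    simp only [hh, hg, hF]
    ring
  -- F is differentiable on Icc
  have hF1 : DifferentiableOn ℝ F (Icc 0 d) :=
    hO1.sub ((differentiableOn_const q).mul differentiableOn_id)
  -- F is concave on Icc
  have hqconv : ConvexOn ℝ (Icc 0 d) (fun z => q * z) := by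
    refine ⟨convex_Icc _ _, fun x _ y _ a b ha hb hab => ?_⟩
    simp only [smul_eq_mul]
    exact le_of_eq (by ring)
  have hFconc : ConcaveOn ℝ (Icc 0 d) F := by
    have := hOconc.concaveOn.sub hqconv
    simpa [hF, Pi.sub_def] using this
  -- F is monotone up to zmax
  have hFmono : ∀ s t : ℝ, 0 ≤ s → s ≤ t → t ≤ zmax → F s ≤ F t := by
    intro s t hs hst htz
    rcases eq_or_lt_of_le hst with rfl | hlt
    · exact le_refl _
    have hsz : s < zmax := lt_of_lt_of_le hlt htz
    set θ : ℝ := (zmax - t) / (zmax - s) with hθ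
    have hne : zmax - s ≠ 0 := sub_ne_zero.mpr (ne_of_gt hsz)
    have hθ0 : 0 ≤ θ := div_nonneg (by linarith) (by linarith)
    have hθ1 : θ ≤ 1 := by
      rw [hθ, div_le_one (by linarith)]; linarith
    have hcomb : θ * s + (1 - θ) * zmax = t := by
      have hm : θ * (zmax - s) = zmax - t := by rw [hθ]; exact div_mul_cancel₀ _ hne
      linarith
    have hsI : s ∈ Icc (0:ℝ) d := ⟨hs, by linarith [hzmax1.2]⟩
    have hkey := hFconc.2 hsI hzmax1 hθ0 (by linarith : (0:ℝ) ≤ 1 - θ) (by ring)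
    simp only [smul_eq_mul] at hkey
    rw [hcomb] at hkey
    have hmax : F s ≤ F zmax := hzmax2 hsI
    nlinarith [hkey, hmax]
  -- g is concave on Icc
  have hgconc : ConcaveOn ℝ (Icc 0 d) g := by
    refine ⟨convex_Icc _ _, fun x hx y hy a b ha hb hab => ?_⟩
    simp only [smul_eq_mul, hg]
    have hmx0 : 0 ≤ min x zmax := le_min hx.1 hzmax1.1
    have hmy0 : 0 ≤ min y zmax := le_min hy.1 hzmax1.1
    have hmxz : min x zmax ≤ zmax := min_le_right _ _
    have hmyz : min y zmax ≤ zmax := min_le_right _ _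
    have hcomb0 : 0 ≤ a * min x zmax + b * min y zmax := by positivity
    have hcomble : a * min x zmax + b * min y zmax ≤ min (a * x + b * y) zmax := by
      refine le_min ?_ ?_
      · have h1 : a * min x zmax ≤ a * x := mul_le_mul_of_nonneg_left (min_le_left _ _) ha
        have h2 : b * min y zmax ≤ b * y := mul_le_mul_of_nonneg_left (min_le_left _ _) hb
        linarith
      · have h1 : a * min x zmax ≤ a * zmax := mul_le_mul_of_nonneg_left hmxz ha
        have h2 : b * min y zmax ≤ b * zmax := mul_le_mul_of_nonneg_left hmyz hb
        nlinarith
    have hmono := hFmono _ _ hcomb0 hcomble (min_le_right _ _)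
    have hxI : min x zmax ∈ Icc (0:ℝ) d := ⟨hmx0, le_trans hmxz hzmax1.2⟩
    have hyI : min y zmax ∈ Icc (0:ℝ) d := ⟨hmy0, le_trans hmyz hzmax1.2⟩
    have hconc := hFconc.2 hxI hyI ha hb hab
    simp only [smul_eq_mul] at hconc
    linarith
  -- h is strictly concave on Icc
  have hhconc : StrictConcaveOn ℝ (Icc 0 d) h := by
    refine ⟨convex_Icc _ _, fun x hx y hy hxy a b ha hb hab => ?_⟩
    simp only [smul_eq_mul, hh]
    have hdx : d - x ∈ Icc (0:ℝ) d := ⟨by linarith [hx.2], by linarith [hx.1]⟩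
    have hdy : d - y ∈ Icc (0:ℝ) d := ⟨by linarith [hy.2], by linarith [hy.1]⟩
    have hne : d - x ≠ d - y := fun hcon => hxy (by linarith)
    have hkey := hPconc.2 hdx hdy hne ha hb hab
    simp only [smul_eq_mul] at hkey
    have e1 : a * (d - x) + b * (d - y) = d - (a * x + b * y) := by linear_combination d * hab
    rw [e1] at hkey
    nlinarith [hkey]
  -- v is strictly concave
  have hvconc : StrictConcaveOn ℝ (Icc 0 d) v := by
    rw [hveq]
    exact hhconc.add_concaveOn hgconc
  -- h is differentiable on Icc
  have hhdiff : DifferentiableOn ℝ h (Icc 0 d) := by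
    have hmap : ∀ x ∈ Icc (0:ℝ) d, d - x ∈ Icc (0:ℝ) d := fun x hx =>
      ⟨by linarith [hx.2], by linarith [hx.1]⟩
    have h1 : DifferentiableOn ℝ (fun x : ℝ => P (d - x)) (Icc 0 d) :=
      hP1.comp (((differentiable_const d).sub differentiable_id).differentiableOn) hmap
    exact h1.sub (((differentiableOn_const d).sub differentiableOn_id).mul
      (differentiableOn_const q))
  -- g is differentiable on Icc
  have hgdiff : DifferentiableOn ℝ g (Icc 0 d) := by
    by_cases hz0 : zmax = 0
    · intro x hx
      exact (differentiableWithinAt_const (F 0)).congr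
        (fun y hy => by simp [hg, hz0, min_eq_right hy.1])
        (by simp [hg, hz0, min_eq_right hx.1])
    by_cases hzd : zmax = d
    · intro x hx
      exact (hF1 x hx).congr (fun y hy => by simp [hg, hzd, min_eq_left hy.2])
        (by simp [hg, hzd, min_eq_left hx.2])
    have h0 : 0 < zmax := lt_of_le_of_ne hzmax1.1 (Ne.symm hz0)
    have hdz : zmax < d := lt_of_le_of_ne hzmax1.2 hzd
    intro x hx
    rcases lt_trichotomy x zmax with hlt | heq | hgt
    · have hmem : Iio zmax ∈ 𝓝[Icc (0:ℝ) d] x :=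
        mem_nhdsWithin_of_mem_nhds (Iio_mem_nhds hlt)
      refine (hF1 x hx).congr_of_eventuallyEq ?_ (by simp [hg, min_eq_left hlt.le])
      exact Filter.eventually_of_mem hmem fun y hy => by
        simp [hg, min_eq_left (le_of_lt (mem_Iio.mp hy))]
    · subst heq
      have hmem : Icc (0:ℝ) d ∈ 𝓝 x := Icc_mem_nhds h0 hdz
      have hFd : DifferentiableAt ℝ F x := (hF1 x hx).differentiableAt hmem
      have hloc : IsLocalMax F x := hzmax2.isLocalMax hmem
      have hder0 : deriv F x = 0 := hloc.deriv_eq_zero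
      have hF0 : HasDerivAt F 0 x := hder0 ▸ hFd.hasDerivAt
      have h1 := hasDerivAt_iff_isLittleO.mp hF0
      simp only [smul_zero, sub_zero] at h1
      have htend : Filter.Tendsto (fun y : ℝ => min y x) (𝓝 x) (𝓝 x) := by
        have hcont : Continuous fun y : ℝ => min y x := continuous_id.min continuous_const
        simpa using hcont.tendsto x
      have h2 := h1.comp_tendsto htend
      have h3 : (fun y : ℝ => min y x - x) =O[𝓝 x] fun y => y - x := by
        apply Asymptotics.isBigO_of_le
        intro y
        simp only [Real.norm_eq_abs]
        rcases le_total y x with hle | hle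
        · rw [min_eq_left hle]
        · rw [min_eq_right hle]
          simp [abs_nonneg]
      have h4 := h2.trans_isBigO h3
      have hg0 : HasDerivAt g 0 x := by
        rw [hasDerivAt_iff_isLittleO]
        simp only [smul_zero, sub_zero]
        have : (fun y : ℝ => g y - g x) = (fun y => F y - F x) ∘ fun y => min y x := by
          funext y
          simp [hg, Function.comp, min_self]
        rw [this]
        exact h4
      exact hg0.differentiableAt.differentiableWithinAt
    · have hmem : Ioi zmax ∈ 𝓝[Icc (0:ℝ) d] x :=
        mem_nhdsWithin_of_mem_nhds (Ioi_mem_nhds hgt)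
      refine (differentiableWithinAt_const (F zmax)).congr_of_eventuallyEq ?_
        (by simp [hg, min_eq_right hgt.le])
      exact Filter.eventually_of_mem hmem fun y hy => by
        simp [hg, min_eq_right (le_of_lt (mem_Ioi.mp hy))]
  -- v differentiable
  have hvdiff : DifferentiableOn ℝ v (Icc 0 d) := by
    rw [hveq]; exact hhdiff.add hgdiff
  -- c expression
  set S : ℝ := sSup (v '' Icc 0 d) with hS
  have hceq : c = fun x => S + (-v) x := by
    funext x
    rw [hc x]
    simp [hS, sub_eq_add_neg]
  have hbdd : BddAbove (v '' Icc 0 d) :=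
    (isCompact_Icc.image_of_continuousOn hvdiff.continuousOn).bddAbove
  refine ⟨?_, ?_, ?_⟩
  · intro x hx
    rw [hc x]
    have : v x ≤ S := le_csSup hbdd ⟨x, hx, rfl⟩
    linarith
  · rw [hceq]
    exact (differentiableOn_const S).add hvdiff.neg
  · rw [hceq]
    exact (convexOn_const S (convex_Icc _ _)).add_strictConvexOn hvconc.neg
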